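/- Let Δ ∈ F be cyclically reduced and let V ∈ F satisfy ‖V‖ ≤ ‖Δ⁻¹ * V * Δ‖ and ‖V‖ ≤ ‖Δ * V * Δ⁻¹‖. Then V is Δ-reduced, i.e. ‖V‖ ≤ ‖Δ^(−k) * V * Δ^k‖ for every integer k. -/

import Mathlib

open FreeGroup

set_option linter.unusedSectionVars false

namespace MyFG

variable {α : Type*} [DecidableEq α]

def Rel : (α × Bool) → (α × Bool) → Prop := fun a b => ¬(a.1 = b.1 ∧ a.2 = !b.2)

lemma chain'_reduce (L : List (α × Bool)) : List.Chain' Rel (FreeGroup.reduce L) := by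
  induction L with
  | nil => simp [List.Chain']
  | cons x L ih =>
    rw [FreeGroup.reduce.cons]
    rcases h : FreeGroup.reduce L with _ | ⟨hd, tl⟩
    · simp [List.Chain']
    · rw [h] at ih
      by_cases hc : x.1 = hd.1 ∧ x.2 = !hd.2
      · simpa [hc, List.Chain'] using ih.tail
      · simpa [hc, List.Chain'] using List.isChain_cons_cons.mpr ⟨hc, ih⟩

lemma reduce_eq_self_of_chain' {L : List (α × Bool)} (h : List.Chain' Rel L) :
    FreeGroup.reduce L = L := by
  induction L with
  | nil => rfl
  | cons x L ih =>
    rw [FreeGroup.reduce.cons, ih h.tail]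
    cases L with
    | nil => rfl
    | cons hd tl =>
      have hr : Rel x hd := (List.isChain_cons_cons.mp h).1
      simp only [Rel] at hr
      simp [if_neg hr]

lemma toWord_chain' (x : FreeGroup α) : List.Chain' Rel x.toWord := by
  rw [← FreeGroup.reduce_toWord]; exact chain'_reduce _

lemma invRev_append (L₁ L₂ : List (α × Bool)) :
    invRev (L₁ ++ L₂) = invRev L₂ ++ invRev L₁ := by
  simp [invRev]

lemma exists_decomp_aux : ∀ (n : ℕ) (x y : FreeGroup α), y.toWord.length ≤ n →
    ∃ A B C : List (α × Bool),
      x.toWord = A ++ C ∧ y.toWord = invRev C ++ B ∧ (x * y).toWord = A ++ B := by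
  intro n
  induction n with
  | zero =>
    intro x y hy
    have : y = 1 := by
      rw [← toWord_eq_nil_iff, ← List.length_eq_zero_iff]; omega
    subst this
    exact ⟨x.toWord, [], [], by simp, by simp [invRev], by simp⟩
  | succ n ih =>
    intro x y hy
    rcases eq_or_ne x 1 with rfl | hx1
    · exact ⟨[], y.toWord, [], by simp, by simp [invRev], by simp⟩
    rcases eq_or_ne y 1 with rfl | hy1
    · exact ⟨x.toWord, [], [], by simp, by simp [invRev], by simp⟩
    obtain ⟨A', a, hLx⟩ : ∃ A' a, x.toWord = A' ++ [a] := by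
      rcases x.toWord.eq_nil_or_concat with h | ⟨A', a, h⟩
      · exact absurd (toWord_eq_nil_iff.mp h) hx1
      · exact ⟨A', a, by simpa using h⟩
    obtain ⟨b, B', hLy⟩ : ∃ b B', y.toWord = b :: B' := by
      rcases hL : y.toWord with _ | ⟨b, B'⟩
      · exact absurd (toWord_eq_nil_iff.mp hL) hy1
      · exact ⟨b, B', rfl⟩
    by_cases hR : Rel a b
    · refine ⟨x.toWord, y.toWord, [], by simp, by simp [invRev], ?_⟩
      have hxy : x * y = mk (x.toWord ++ y.toWord) := by
        rw [← mul_mk, mk_toWord, mk_toWord]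
      rw [hxy, toWord_mk, reduce_eq_self_of_chain']
      refine List.isChain_append.mpr ⟨toWord_chain' x, toWord_chain' y, ?_⟩
      intro p hp q hq
      rw [hLx, List.getLast?_concat] at hp
      rw [hLy] at hq
      simp only [List.head?_cons, Option.mem_def, Option.some.injEq] at hp hq
      subst hp; subst hq
      exact hR
    · simp only [Rel, not_not] at hR
      have hb : b = (a.1, !a.2) := by
        obtain ⟨h1, h2⟩ := hR
        ext
        · exact h1.symm
        · simp [h2]
      have hA' : List.Chain' Rel A' := (toWord_chain' x).prefix ⟨[a], hLx.symm⟩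
      have hB' : List.Chain' Rel B' := (toWord_chain' y).suffix ⟨[b], hLy.symm⟩
      have hx' : (mk A' : FreeGroup α).toWord = A' := by
        rw [toWord_mk, reduce_eq_self_of_chain' hA']
      have hy' : (mk B' : FreeGroup α).toWord = B' := by
        rw [toWord_mk, reduce_eq_self_of_chain' hB']
      have hxy : x * y = mk A' * mk B' := by
        have hx2 : x = mk A' * mk [a] := by
          rw [mul_mk, ← hLx, mk_toWord]
        have hy2 : y = mk [b] * mk B' := by
          rw [mul_mk, List.singleton_append, ← hLy, mk_toWord]
        have hcancel : (mk [a] : FreeGroup α) * mk [b] = 1 := by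
          rw [mul_mk, one_eq_mk]
          apply FreeGroup.reduce.exact
          simp [FreeGroup.reduce, hb]
        rw [hx2, hy2, show mk A' * mk [a] * (mk [b] * mk B') =
          mk A' * (mk [a] * mk [b]) * mk B' by group, hcancel, mul_one]
      have hlen : (mk B' : FreeGroup α).toWord.length ≤ n := by
        rw [hy']
        have : y.toWord.length = B'.length + 1 := by rw [hLy]; simp
        omega
      obtain ⟨A, B, C', h1, h2, h3⟩ := ih (mk A') (mk B') hlen
      refine ⟨A, B, C' ++ [a], ?_, ?_, ?_⟩
      · rw [hLx, hx'.symm.trans h1, List.append_assoc]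
      · rw [hLy, hy'.symm.trans h2, invRev_append]
        simp [invRev, hb]
      · rw [hxy, h3]

lemma exists_decomp (x y : FreeGroup α) :
    ∃ A B C : List (α × Bool),
      x.toWord = A ++ C ∧ y.toWord = invRev C ++ B ∧ (x * y).toWord = A ++ B :=
  exists_decomp_aux y.toWord.length x y le_rfl

lemma norm_eq_length (x : FreeGroup α) : x.norm = x.toWord.length := rfl

/-- Common prefix data for the pair `(x, y)`, computing `(x⁻¹ * y).norm` exactly. -/
lemma cp_exists (x y : FreeGroup α) :
    ∃ P S₁ S₂ : List (α × Bool), x.toWord = P ++ S₁ ∧ y.toWord = P ++ S₂ ∧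
      x.norm = P.length + S₁.length ∧ y.norm = P.length + S₂.length ∧
      (x⁻¹ * y).norm = S₁.length + S₂.length := by
  obtain ⟨A, B, C, h1, h2, h3⟩ := exists_decomp x⁻¹ y
  have hx : x.toWord = invRev C ++ invRev A := by
    rw [show x = (x⁻¹)⁻¹ by group, toWord_inv, h1, invRev_append]
  refine ⟨invRev C, invRev A, B, hx, h2, ?_, ?_, ?_⟩
  · rw [norm_eq_length, hx]; simp
  · rw [norm_eq_length, h2]; simp
  · rw [norm_eq_length, h3]; simp

lemma norm_le_of_common_prefix {x y : FreeGroup α} {P S₁ S₂ : List (α × Bool)}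
    (hx : x.toWord = P ++ S₁) (hy : y.toWord = P ++ S₂) :
    (x⁻¹ * y).norm ≤ S₁.length + S₂.length := by
  have hx' : x = mk P * mk S₁ := by rw [mul_mk, ← hx, mk_toWord]
  have hy' : y = mk P * mk S₂ := by rw [mul_mk, ← hy, mk_toWord]
  have h : x⁻¹ * y = mk (invRev S₁ ++ S₂) := by
    rw [← mul_mk, ← inv_mk, hx', hy']
    group
  rw [h]
  calc (mk (invRev S₁ ++ S₂)).norm ≤ (invRev S₁ ++ S₂).length := norm_mk_le
    _ = S₁.length + S₂.length := by simp

/-- The Gromov-product ultrametric inequality for the free group. -/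
lemma ultrametric (x y z : FreeGroup α) :
    min ((x.norm : ℤ) + y.norm - (x⁻¹ * y).norm) ((y.norm : ℤ) + z.norm - (y⁻¹ * z).norm)
      ≤ (x.norm : ℤ) + z.norm - (x⁻¹ * z).norm := by
  obtain ⟨P₁, S₁, S₂, hx1, hy1, nx1, ny1, nxy⟩ := cp_exists x y
  obtain ⟨P₂, T₁, T₂, hy2, hz2, ny2, nz2, nyz⟩ := cp_exists y z
  rcases le_total P₁.length P₂.length with h | h
  · have hpre : P₁ <+: P₂ :=
      List.prefix_of_prefix_length_le ⟨S₂, hy1.symm⟩ ⟨T₁, hy2.symm⟩ h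
    obtain ⟨T, rfl⟩ := hpre
    have hz : z.toWord = P₁ ++ (T ++ T₂) := by rw [hz2, List.append_assoc]
    have hb := norm_le_of_common_prefix hx1 hz
    simp only [List.length_append] at hb nz2
    omega
  · have hpre : P₂ <+: P₁ :=
      List.prefix_of_prefix_length_le ⟨T₁, hy2.symm⟩ ⟨S₂, hy1.symm⟩ h
    obtain ⟨T, rfl⟩ := hpre
    have hx : x.toWord = P₂ ++ (T ++ S₁) := by rw [hx1, List.append_assoc]
    have hb := norm_le_of_common_prefix hx hz2
    simp only [List.length_append] at hb nx1 ny1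
    omega

lemma sq_norm (Δ : FreeGroup α) (hΔ : ∀ g : FreeGroup α, Δ.norm ≤ (g⁻¹ * Δ * g).norm) :
    ((Δ * Δ).norm : ℤ) = 2 * Δ.norm := by
  have hle : (Δ * Δ).norm ≤ Δ.norm + Δ.norm := norm_mul_le _ _
  by_contra hne
  have hlt : (Δ * Δ).norm < 2 * Δ.norm := by omega
  obtain ⟨P, S₁, S₂, h1, h2, n1, n2, n3⟩ := cp_exists Δ⁻¹ Δ
  rw [inv_inv] at n3
  have hninv : (Δ⁻¹).norm = Δ.norm := norm_inv_eq
  have hP : 0 < P.length := by omega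
  obtain ⟨ℓ, P', rfl⟩ : ∃ ℓ P', P = ℓ :: P' := by
    cases P with
    | nil => simp at hP
    | cons ℓ P' => exact ⟨ℓ, P', rfl⟩
  have hinv : invRev Δ.toWord = ℓ :: (P' ++ S₁) := by
    rw [← toWord_inv, h1]; rfl
  have hΔw : Δ.toWord = ℓ :: (P' ++ S₂) := by rw [h2]; rfl
  rcases (P' ++ S₂).eq_nil_or_concat with hM | ⟨M', m, hM⟩
  · rw [hM] at hΔw
    rw [hΔw] at hinv
    simp only [invRev, List.map_cons, List.map_nil, List.reverse_cons, List.reverse_nil,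
      List.nil_append, List.cons.injEq] at hinv
    have : (ℓ.1, !ℓ.2) = ℓ := hinv.1
    rw [Prod.ext_iff] at this
    simp at this
  · rw [hM] at hΔw
    have hm : (m.1, !m.2) = ℓ := by
      have hg : Δ.toWord.getLast? = some m := by
        rw [hΔw, List.concat_eq_append, ← List.cons_append, List.getLast?_concat]
      have hh := congrArg List.head? hinv
      rw [show (invRev Δ.toWord).head? = Δ.toWord.getLast?.map (fun g => (g.1, !g.2)) by
        simp [FreeGroup.invRev, List.head?_reverse, List.getLast?_map], hg] at hh
      simpa using hh
    have hmval : m = (ℓ.1, !ℓ.2) := by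
      rw [Prod.ext_iff] at hm ⊢
      simp only at hm ⊢
      refine ⟨hm.1, ?_⟩
      have := hm.2
      simp [← this]
    have hΔeq : Δ = mk [ℓ] * mk M' * mk [m] := by
      rw [mul_mk, mul_mk, ← mk_toWord (x := Δ)]
      congr 1
      rw [hΔw]; simp
    have hinvℓ : (mk [ℓ] : FreeGroup α)⁻¹ = mk [m] := by
      rw [inv_mk]
      congr 1
      simp [invRev, hmval]
    have hconj : (mk [ℓ] : FreeGroup α)⁻¹ * Δ * (mk [ℓ]) = mk M' := by
      rw [hΔeq, ← hinvℓ]; group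
    have hc := hΔ (mk [ℓ])
    rw [hconj] at hc
    have hmk : (mk M' : FreeGroup α).norm ≤ M'.length := norm_mk_le
    have hlen : Δ.norm = M'.length + 2 := by
      rw [norm_eq_length, hΔw]; simp
    omega

lemma tri (a b : FreeGroup α) : ((a * b).norm : ℤ) ≤ a.norm + b.norm := by
  exact_mod_cast norm_mul_le a b

lemma key (Δ : FreeGroup α) (hsq : ((Δ * Δ).norm : ℤ) = 2 * Δ.norm) (W : FreeGroup α) :
    2 * (W.norm : ℤ) ≤ ((Δ⁻¹ * W * Δ).norm : ℤ) + ((Δ * W * Δ⁻¹).norm : ℤ) := by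
  rcases eq_or_ne W 1 with rfl | hW
  · simp
  have hn : 1 ≤ (W.norm : ℤ) := by
    have := norm_eq_zero (x := W)
    have : W.norm ≠ 0 := fun h => hW (norm_eq_zero.mp h)
    omega
  have hdinv : ((Δ⁻¹).norm : ℤ) = Δ.norm := by exact_mod_cast norm_inv_eq
  have hwinv : ((W⁻¹).norm : ℤ) = W.norm := by exact_mod_cast norm_inv_eq
  have hsqinv : ((Δ⁻¹ * Δ⁻¹).norm : ℤ) = 2 * Δ.norm := by
    rw [show Δ⁻¹ * Δ⁻¹ = (Δ * Δ)⁻¹ by group]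
    rw [show ((Δ * Δ)⁻¹.norm : ℤ) = (Δ * Δ).norm by exact_mod_cast norm_inv_eq, hsq]
  -- ultrametric inequalities
  have u1 := ultrametric Δ W⁻¹ Δ⁻¹
  rw [inv_inv, show Δ⁻¹ * W⁻¹ = (W * Δ)⁻¹ by group,
    show ((W * Δ)⁻¹.norm : ℤ) = (W * Δ).norm by exact_mod_cast norm_inv_eq,
    show (W : FreeGroup α) * Δ⁻¹ = W * Δ⁻¹ from rfl] at u1
  have u2 := ultrametric Δ W Δ⁻¹
  rw [show W⁻¹ * Δ⁻¹ = (Δ * W)⁻¹ by group,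
    show ((Δ * W)⁻¹.norm : ℤ) = (Δ * W).norm by exact_mod_cast norm_inv_eq] at u2
  have u3 := ultrametric Δ (W * Δ) W
  rw [show Δ⁻¹ * (W * Δ) = Δ⁻¹ * W * Δ by group,
    show (W * Δ)⁻¹ * W = Δ⁻¹ by group] at u3
  have u4 := ultrametric Δ⁻¹ (W * Δ⁻¹) W
  rw [inv_inv, show Δ * (W * Δ⁻¹) = Δ * W * Δ⁻¹ by group,
    show (W * Δ⁻¹)⁻¹ * W = Δ by group] at u4
  -- triangle inequalities
  have t1 := tri (Δ⁻¹ * W * Δ) Δ⁻¹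
  rw [show Δ⁻¹ * W * Δ * Δ⁻¹ = Δ⁻¹ * W by group] at t1
  have t2 := tri Δ (Δ⁻¹ * W * Δ)
  rw [show Δ * (Δ⁻¹ * W * Δ) = W * Δ by group] at t2
  have t3 := tri Δ⁻¹ (Δ * W * Δ⁻¹)
  rw [show Δ⁻¹ * (Δ * W * Δ⁻¹) = W * Δ⁻¹ by group] at t3
  have t4 := tri (Δ * W * Δ⁻¹) Δ
  rw [show Δ * W * Δ⁻¹ * Δ = Δ * W by group] at t4
  have t5 := tri (Δ⁻¹ * W) Δ
  rw [show Δ⁻¹ * W * Δ = Δ⁻¹ * W * Δ from rfl] at t5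
  have t6 := tri Δ⁻¹ W
  have t7 := tri W Δ
  have t8 := tri W Δ⁻¹
  have t9 := tri Δ W
  have t10 := tri (W * Δ) Δ⁻¹
  rw [show W * Δ * Δ⁻¹ = W by group] at t10
  have t11 := tri (W * Δ⁻¹) Δ
  rw [show W * Δ⁻¹ * Δ = W by group] at t11
  have t12 := tri (Δ * W) Δ⁻¹
  rw [show Δ * W * Δ⁻¹ = Δ * W * Δ⁻¹ from rfl] at t12
  have t13 := tri (Δ⁻¹ * W) Δ
  have t14 := tri Δ (W * Δ⁻¹)
  rw [show Δ * (W * Δ⁻¹) = Δ * W * Δ⁻¹ by group] at t14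
  have t15 := tri Δ⁻¹ (W * Δ)
  rw [show Δ⁻¹ * (W * Δ) = Δ⁻¹ * W * Δ by group] at t15
  omega

end MyFG


/-- **Lemma 3.** If `Δ` is cyclically reduced and
`‖V‖ ≤ ‖Δ⁻¹ V Δ‖` and `‖V‖ ≤ ‖Δ V Δ⁻¹‖`, then `V` is `Δ`-reduced:
`‖V‖ ≤ ‖Δ^(-k) V Δ^k‖` for every integer `k`. -/
theorem delta_reduced_of_one_step_reduced
    {α : Type*} [DecidableEq α] (Δ V : FreeGroup α)
    (hΔ : ∀ g : FreeGroup α, Δ.norm ≤ (g⁻¹ * Δ * g).norm)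
    (h1 : V.norm ≤ (Δ⁻¹ * V * Δ).norm)
    (h2 : V.norm ≤ (Δ * V * Δ⁻¹).norm) :
    ∀ k : ℤ, V.norm ≤ (Δ ^ (-k) * V * Δ ^ k).norm := by
  have hsq := MyFG.sq_norm Δ hΔ
  set f : ℤ → ℤ := fun k => ((Δ ^ (-k) * V * Δ ^ k).norm : ℤ) with hf
  have key2 : ∀ m : ℤ, 2 * f m ≤ f (m + 1) + f (m - 1) := by
    intro m
    have h := MyFG.key Δ hsq (Δ ^ (-m) * V * Δ ^ m)
    have e1 : Δ⁻¹ * (Δ ^ (-m) * V * Δ ^ m) * Δ = Δ ^ (-(m + 1)) * V * Δ ^ (m + 1) := by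
      group
    have e2 : Δ * (Δ ^ (-m) * V * Δ ^ m) * Δ⁻¹ = Δ ^ (-(m - 1)) * V * Δ ^ (m - 1) := by
      group
    rw [e1, e2] at h
    exact h
  have f0 : f 0 = (V.norm : ℤ) := by simp [hf]
  have f1 : f 1 = ((Δ⁻¹ * V * Δ).norm : ℤ) := by simp [hf]
  have fneg1 : f (-1) = ((Δ * V * Δ⁻¹).norm : ℤ) := by simp [hf]
  have fup : ∀ n : ℕ, f n ≤ f (n + 1) := by
    intro n
    induction n with
    | zero =>
      rw [show ((0 : ℕ) : ℤ) = 0 by norm_num, show (0 : ℤ) + 1 = 1 by norm_num, f0, f1]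
      exact_mod_cast h1
    | succ n ih =>
      have h := key2 ((n : ℤ) + 1)
      rw [show ((n : ℤ) + 1 - 1) = (n : ℤ) by ring] at h
      push_cast
      linarith
  have fge : ∀ n : ℕ, f 0 ≤ f n := by
    intro n
    induction n with
    | zero => norm_num
    | succ n ih =>
      have := fup n
      push_cast at *
      linarith
  have fdown : ∀ n : ℕ, f (-(n : ℤ)) ≤ f (-(n : ℤ) - 1) := by
    intro n
    induction n with
    | zero =>
      rw [show (-((0 : ℕ) : ℤ)) = 0 by norm_num, show (0 : ℤ) - 1 = -1 by norm_num, f0, fneg1]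
      exact_mod_cast h2
    | succ n ih =>
      have h := key2 (-(n : ℤ) - 1)
      rw [show (-(n : ℤ) - 1 + 1) = -(n : ℤ) by ring] at h
      have e : (-((n + 1 : ℕ) : ℤ)) = -(n : ℤ) - 1 := by push_cast; ring
      rw [e, show (-(n : ℤ) - 1 - 1) = -(n : ℤ) - 1 - 1 from rfl] at *
      linarith
  have fgeneg : ∀ n : ℕ, f 0 ≤ f (-(n : ℤ)) := by
    intro n
    induction n with
    | zero => norm_num
    | succ n ih =>
      have := fdown n
      have e : (-((n + 1 : ℕ) : ℤ)) = -(n : ℤ) - 1 := by push_cast; ring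
      rw [e]
      linarith
  intro k
  obtain ⟨n, rfl | rfl⟩ := k.eq_nat_or_neg
  · have := fge n
    rw [f0] at this
    simp only [hf] at this
    exact_mod_cast this
  · have := fgeneg n
    rw [f0] at this
    simp only [hf] at this
    exact_mod_cast this
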